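/- For every z > 0, ∫₀^z sech(πx/2) · sech(π(z−x)/2) dx = (4/π) csch(πz/2) · log(cosh(πz/2)). -/

import Mathlib

open Real intervalIntegral

theorem sech_convolution (z : ℝ) (hz : z > 0) :
    ∫ x in (0:ℝ)..z,
        (2 / (Real.exp (Real.pi * x / 2) + Real.exp (-(Real.pi * x / 2)))) *
        (2 / (Real.exp (Real.pi * (z - x) / 2) + Real.exp (-(Real.pi * (z - x) / 2))))
      = 4 / Real.pi * (2 / (Real.exp (Real.pi * z / 2) - Real.exp (-(Real.pi * z / 2)))) *
        Real.log ((Real.exp (Real.pi * z / 2) + Real.exp (-(Real.pi * z / 2))) / 2) := by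
  have hpi := Real.pi_pos
  have hs : Real.sinh (Real.pi * z / 2) > 0 := Real.sinh_pos_iff.mpr (by positivity)
  set F : ℝ → ℝ := fun x =>
    (Real.log (Real.cosh (Real.pi * x / 2)) - Real.log (Real.cosh (Real.pi * (z - x) / 2))) /
      (Real.pi / 2 * Real.sinh (Real.pi * z / 2)) with hF
  have key : ∀ x ∈ Set.uIcc (0:ℝ) z, HasDerivAt F
      ((2 / (Real.exp (Real.pi * x / 2) + Real.exp (-(Real.pi * x / 2)))) *
        (2 / (Real.exp (Real.pi * (z - x) / 2) + Real.exp (-(Real.pi * (z - x) / 2))))) x := by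
    intro x _
    have h1 : HasDerivAt (fun x : ℝ => Real.pi * x / 2) (Real.pi / 2) x := by
      simpa using (((hasDerivAt_id x).const_mul Real.pi).div_const 2)
    have h2 : HasDerivAt (fun x : ℝ => Real.pi * (z - x) / 2) (-(Real.pi / 2)) x := by
      have : HasDerivAt (fun x : ℝ => z - x) (-1) x := by
        exact ((hasDerivAt_const x z).sub (hasDerivAt_id' x)).congr_deriv (by ring)
      simpa [neg_div] using ((this.const_mul Real.pi).div_const 2)
    have hc1 := (Real.hasDerivAt_cosh (Real.pi * x / 2)).comp x h1
    have hc2 := (Real.hasDerivAt_cosh (Real.pi * (z - x) / 2)).comp x h2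
    have hl1 := hc1.log (Real.cosh_pos _).ne'
    have hl2 := hc2.log (Real.cosh_pos _).ne'
    have hd := ((hl1.sub hl2).div_const (Real.pi / 2 * Real.sinh (Real.pi * z / 2)))
    refine hd.congr_deriv (Eq.symm ?_)
    have hadd : Real.pi * x / 2 + Real.pi * (z - x) / 2 = Real.pi * z / 2 := by ring
    have hsinh : Real.sinh (Real.pi * z / 2)
        = Real.sinh (Real.pi * x / 2) * Real.cosh (Real.pi * (z - x) / 2)
          + Real.cosh (Real.pi * x / 2) * Real.sinh (Real.pi * (z - x) / 2) := by
      rw [← hadd, Real.sinh_add]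
    have e1 : Real.exp (Real.pi * x / 2) + Real.exp (-(Real.pi * x / 2))
        = 2 * Real.cosh (Real.pi * x / 2) := by rw [Real.cosh_eq]; ring
    have e2 : Real.exp (Real.pi * (z - x) / 2) + Real.exp (-(Real.pi * (z - x) / 2))
        = 2 * Real.cosh (Real.pi * (z - x) / 2) := by rw [Real.cosh_eq]; ring
    rw [e1, e2]
    simp only [Function.comp_apply]
    have c1 : Real.cosh (Real.pi * x / 2) > 0 := Real.cosh_pos _
    have c2 : Real.cosh (Real.pi * (z - x) / 2) > 0 := Real.cosh_pos _
    field_simp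
    rw [hsinh]
    ring
  have hcont : IntervalIntegrable (fun x =>
      (2 / (Real.exp (Real.pi * x / 2) + Real.exp (-(Real.pi * x / 2)))) *
        (2 / (Real.exp (Real.pi * (z - x) / 2) + Real.exp (-(Real.pi * (z - x) / 2)))))
      MeasureTheory.volume 0 z := by
    apply Continuous.intervalIntegrable
    apply Continuous.mul
    · exact continuous_const.div (by fun_prop) (fun x => by positivity)
    · exact continuous_const.div (by fun_prop) (fun x => by positivity)
  rw [intervalIntegral.integral_eq_sub_of_hasDerivAt key hcont]
  have e3 : Real.exp (Real.pi * z / 2) - Real.exp (-(Real.pi * z / 2))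
      = 2 * Real.sinh (Real.pi * z / 2) := by rw [Real.sinh_eq]; ring
  have e4 : (Real.exp (Real.pi * z / 2) + Real.exp (-(Real.pi * z / 2))) / 2
      = Real.cosh (Real.pi * z / 2) := by rw [Real.cosh_eq]
  rw [e3, e4, hF]
  simp only []
  rw [show Real.pi * 0 / 2 = 0 by ring, show z - 0 = z by ring, show z - z = 0 by ring,
    Real.cosh_zero, Real.log_one]
  field_simp
  ring_nf
  simp [Real.cosh_zero, Real.log_one]
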